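/- Let d ≥ 2 and let P be a stationary and ergodic probability measure on (Ω,F). Let L²_{∇*} be the closure of {D^*ζ : ζ ∈ L^∞(Ω,ℝ)} in L²(Ω,ℝ^d), let f ∈ L²(Ω,ℝ^d), and let ξ be the orthogonal projection of f onto L²_{∇*}. Then there exists a unique family (u_ε)_{ε∈(0,1)} ⊆ L²(Ω,ℝ) and there exists a sequence (ε_n)_{n∈ℕ} ⊆ (0,1) such that for every ε ∈ (0,1) one has (ε + D·D^*) u_ε = D·f in L²(Ω,ℝ), and such that for every G ∈ L²(Ω,ℝ^d), lim_{n→∞} E_P[D^* u_{ε_n} · G] = E_P[ξ · G]. -/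

import Mathlib

open MeasureTheory Filter
open scoped ENNReal Classical

noncomputable section

/-- Points of the lattice `ℤ^d`. -/
abbrev Zd (d : ℕ) := Fin d → ℤ

/-- The `i`-th standard unit vector of `ℤ^d`. -/
def unitVec {d : ℕ} (i : Fin d) : Zd d := fun j => if j = i then 1 else 0

/-- Environments: a positive conductance for every (unoriented nearest-neighbour) edge,
where the edge `{x, x + e i}` is encoded by the pair `(x, i)`. -/
abbrev Env (d : ℕ) := ((Fin d → ℤ) × Fin d) → {r : ℝ // 0 < r}

/-- The conductance of the edge `{x, x + e i}` in the environment `ω`, as a real number. -/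
def cval {d : ℕ} (ω : Env d) (x : Zd d) (i : Fin d) : ℝ := (ω (x, i)).1

/-- Nearest-neighbour adjacency on `ℤ^d`. -/
def Adj {d : ℕ} (x y : Zd d) : Prop :=
  ∃ i : Fin d, y = x + unitVec i ∨ x = y + unitVec i

/-- The conductance `ω_{xy}` between two nearest neighbours `x ∼ y` (and `0` otherwise). -/
def econd {d : ℕ} (ω : Env d) (x y : Zd d) : ℝ :=
  ∑ i : Fin d, ((if y = x + unitVec i then cval ω x i else 0)
    + (if x = y + unitVec i then cval ω y i else 0))

/-- Discrete gradient `(∇_i u)(x) = u(x+e_i) - u(x)`. -/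
def dGrad {d : ℕ} (i : Fin d) (f : Zd d → ℝ) (x : Zd d) : ℝ :=
  f (x + unitVec i) - f x

/-- Discrete backward gradient `(∇_i^* u)(x) = u(x-e_i) - u(x)`. -/
def dGradStar {d : ℕ} (i : Fin d) (f : Zd d → ℝ) (x : Zd d) : ℝ :=
  f (x - unitVec i) - f x

/-- Discrete divergence `(∇^* ⬝ F)(x) = ∑ i, (F_i(x-e_i) - F_i(x))`. -/
def divStar {d : ℕ} (F : Zd d → Fin d → ℝ) (x : Zd d) : ℝ :=
  ∑ i : Fin d, (F (x - unitVec i) i - F x i)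

/-- Discrete Laplacian `Δu = -∑ i, ∇_i^* ∇_i u`. -/
def lap {d : ℕ} (f : Zd d → ℝ) (x : Zd d) : ℝ :=
  - ∑ i : Fin d, dGradStar i (dGrad i f) x

/-- The open discrete box `D_R = {x : |x|_∞ < R}`. -/
def boxD (d R : ℕ) : Finset (Zd d) :=
  Fintype.piFinset fun _ => Finset.Ioo (-(R : ℤ)) (R : ℤ)

/-- The closed discrete box `D̄_R = {x : |x|_∞ ≤ R}`. -/
def boxC (d R : ℕ) : Finset (Zd d) :=
  Fintype.piFinset fun _ => Finset.Icc (-(R : ℤ)) (R : ℤ)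

/-- The discrete boundary `∂D_R = {x : |x|_∞ = R}`. -/
def bdry (d R : ℕ) : Finset (Zd d) := boxC d R \ boxD d R

/-- The reduced boundary `∂̃D_R` of points of `∂D_R` having a neighbour in `D_R`. -/
def tbdry (d R : ℕ) : Finset (Zd d) :=
  (bdry d R).filter fun x => ∃ y ∈ boxD d R, Adj x y

/-- The oriented edge set `E_R = {(x,y) : x ∼ y, |x+y|_∞ < 2R}`. -/
def ER (d R : ℕ) : Finset (Zd d × Zd d) :=
  ((boxC d R) ×ˢ (boxC d R)).filter fun e =>
    Adj e.1 e.2 ∧ ∀ i, |e.1 i + e.2 i| < 2 * (R : ℤ)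

/-- The normal edges `E_R^{nor} = {(x,y) : x ∈ D_R, y ∈ ∂D_R, x ∼ y}`. -/
def Enor (d R : ℕ) : Finset (Zd d × Zd d) :=
  ((boxD d R) ×ˢ (bdry d R)).filter fun e => Adj e.1 e.2

/-- The tangential edges `E_R^{tan} = {(x,y) : x, y ∈ ∂D_R, x ∼ y}`. -/
def Etan (d R : ℕ) : Finset (Zd d × Zd d) :=
  ((bdry d R) ×ˢ (bdry d R)).filter fun e => Adj e.1 e.2

/-- Normalized `ℓ^r` norm `⦀u⦀_{r,A}` on a finite set. -/
def avNorm {V : Type*} (r : ℝ) (A : Finset V) (u : V → ℝ) : ℝ :=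
  ((∑ x ∈ A, |u x| ^ r) / (A.card : ℝ)) ^ (1 / r)

/-- Sup norm `⦀u⦀_{∞,A}` on a finite set. -/
def supNorm {V : Type*} (A : Finset V) (u : V → ℝ) : ℝ :=
  ⨆ x ∈ A, |u x|

/-- Normalized `ℓ^r` norm for an extended exponent `r ∈ [1,∞]`. -/
def avNormE {V : Type*} (r : ℝ≥0∞) (A : Finset V) (u : V → ℝ) : ℝ :=
  if r = ∞ then supNorm A u else avNorm r.toReal A u

/-- The exponent `2p/(p-1)`, with the convention that it equals `2` for `p = ∞`. -/
def dualExp (p : ℝ≥0∞) : ℝ :=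
  if p = ∞ then 2 else 2 * p.toReal / (p.toReal - 1)

/-- The exponent `2p/(p+1)`, with the convention that it equals `2` for `p = ∞`. -/
def coExp (p : ℝ≥0∞) : ℝ :=
  if p = ∞ then 2 else 2 * p.toReal / (p.toReal + 1)

/-- Euclidean norm on `ℝ^d`. -/
def vecNorm {d : ℕ} (v : Fin d → ℝ) : ℝ := Real.sqrt (∑ i, v i ^ 2)

/-- The translation `τ_a` acting on environments. -/
def shiftEnv {d : ℕ} (a : Zd d) (ω : Env d) : Env d := fun e => ω (e.1 + a, e.2)

/-- Stationarity of a measure on environments. -/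
def Stationary {d : ℕ} (P : Measure (Env d)) : Prop :=
  ∀ a : Zd d, MeasurePreserving (shiftEnv a) P P

/-- Ergodicity of a measure on environments w.r.t. the translations. -/
def ErgodicEnv {d : ℕ} (P : Measure (Env d)) : Prop :=
  ∀ A : Set (Env d), MeasurableSet A → (∀ a : Zd d, shiftEnv a ⁻¹' A = A) →
    P A = 0 ∨ P A = 1

/-- Stationary (`Stat_P`) random fields. -/
def StatP {d : ℕ} {E : Type*} [MeasurableSpace E] (P : Measure (Env d))
    (f : Env d → Zd d → E) : Prop :=
  Measurable (Function.uncurry f) ∧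
    ∀ᵐ ω ∂P, ∀ x : Zd d, f ω x = f (shiftEnv x ω) 0

/-- The horizontal derivative `D_i` on functions of the environment. -/
def Dop {d : ℕ} (i : Fin d) (ζ : Env d → ℝ) : Env d → ℝ :=
  fun ω => ζ (shiftEnv (unitVec i) ω) - ζ ω

/-- The horizontal derivative `D_i^*` on functions of the environment. -/
def DopStar {d : ℕ} (i : Fin d) (ζ : Env d → ℝ) : Env d → ℝ :=
  fun ω => ζ (shiftEnv (-(unitVec i)) ω) - ζ ω

/-- The reflection of `ℤ^d` flipping the `j`-th coordinate. -/
def reflPt {d : ℕ} (j : Fin d) (x : Zd d) : Zd d := fun k => if k = j then -x k else x k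

/-- The reflection `ρ_j` acting on environments. -/
def reflEnv {d : ℕ} (j : Fin d) (ω : Env d) : Env d :=
  fun e => ω (if e.2 = j then reflPt j e.1 - unitVec j else reflPt j e.1, e.2)

/-- `ζ` is (essentially) bounded and measurable, i.e. `ζ ∈ L^∞(Ω,ℝ)`. -/
def BddMeas {d : ℕ} (P : Measure (Env d)) (ζ : Env d → ℝ) : Prop :=
  Measurable ζ ∧ ∃ C : ℝ, ∀ᵐ ω ∂P, |ζ ω| ≤ C

open scoped RealInnerProductSpace Topology

instance PiLp.completeSpace' {ι : Type*} (p : ENNReal) (β : ι → Type*) [∀ i, UniformSpace (β i)]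
    [∀ i, CompleteSpace (β i)] : CompleteSpace (PiLp p β) :=
  inferInstance

section AuxWC

open scoped RealInnerProductSpace

set_option linter.unusedSectionVars false

variable {d : ℕ} {P : Measure (Env d)} [IsProbabilityMeasure P]

lemma shiftEnv_shiftEnv (a b : Zd d) (ω : Env d) :
    shiftEnv a (shiftEnv b ω) = shiftEnv (a + b) ω := by
  funext e; simp [shiftEnv, add_assoc]

lemma shiftEnv_zero (ω : Env d) : shiftEnv (0 : Zd d) ω = ω := by
  funext e; simp [shiftEnv]

/-- The shift operator on `L²`. -/
def Sop (hstat : Stationary P) (a : Zd d) : Lp ℝ 2 P →L[ℝ] Lp ℝ 2 P :=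
  (Lp.compMeasurePreservingₗᵢ ℝ (shiftEnv a) (hstat a)).toContinuousLinearMap

lemma Sop_coeFn (hstat : Stationary P) (a : Zd d) (u : Lp ℝ 2 P) :
    ⇑(Sop hstat a u) =ᵐ[P] ⇑u ∘ shiftEnv a :=
  Lp.coeFn_compMeasurePreserving u (hstat a)

lemma Sop_inner (hstat : Stationary P) (a : Zd d) (u v : Lp ℝ 2 P) :
    ⟪Sop hstat a u, Sop hstat a v⟫ = ⟪u, v⟫ :=
  (Lp.compMeasurePreservingₗᵢ ℝ (shiftEnv a) (hstat a)).inner_map_map u v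

lemma Sop_Sop (hstat : Stationary P) (a b : Zd d) (u : Lp ℝ 2 P) :
    Sop hstat a (Sop hstat b u) = Sop hstat (b + a) u := by
  apply Lp.ext
  have h1 := Sop_coeFn hstat a (Sop hstat b u)
  have h2 : (⇑(Sop hstat b u)) ∘ shiftEnv a =ᵐ[P] (⇑u ∘ shiftEnv b) ∘ shiftEnv a :=
    (hstat a).quasiMeasurePreserving.ae_eq (Sop_coeFn hstat b u)
  have h3 : (⇑u ∘ shiftEnv b) ∘ shiftEnv a = ⇑u ∘ shiftEnv (b + a) := by
    funext ω; simp [Function.comp, shiftEnv_shiftEnv]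
  exact h1.trans ((h2.trans (by rw [h3])).trans (Sop_coeFn hstat (b + a) u).symm)

lemma Sop_zero (hstat : Stationary P) (u : Lp ℝ 2 P) : Sop hstat (0 : Zd d) u = u := by
  apply Lp.ext
  refine (Sop_coeFn hstat 0 u).trans ?_
  refine Filter.EventuallyEq.of_eq ?_
  funext ω; simp [Function.comp, shiftEnv_zero]

lemma Sop_adjoint (hstat : Stationary P) (a : Zd d) (u v : Lp ℝ 2 P) :
    ⟪Sop hstat a u, v⟫ = ⟪u, Sop hstat (-a) v⟫ := by
  conv_lhs => rw [show v = Sop hstat a (Sop hstat (-a) v) by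
    rw [Sop_Sop, neg_add_cancel, Sop_zero]]
  rw [Sop_inner]

/-- The `L²` operator corresponding to `Dop i`. -/
def Dlp (hstat : Stationary P) (i : Fin d) : Lp ℝ 2 P →L[ℝ] Lp ℝ 2 P :=
  Sop hstat (unitVec i) - ContinuousLinearMap.id ℝ _

/-- The `L²` operator corresponding to `DopStar i`. -/
def DlpStar (hstat : Stationary P) (i : Fin d) : Lp ℝ 2 P →L[ℝ] Lp ℝ 2 P :=
  Sop hstat (-(unitVec i)) - ContinuousLinearMap.id ℝ _

lemma Dlp_adjoint (hstat : Stationary P) (i : Fin d) (u v : Lp ℝ 2 P) :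
    ⟪Dlp hstat i u, v⟫ = ⟪u, DlpStar hstat i v⟫ := by
  simp only [Dlp, DlpStar, ContinuousLinearMap.sub_apply, ContinuousLinearMap.id_apply,
    inner_sub_left, inner_sub_right, Sop_adjoint hstat (unitVec i) u v]

/-- Generic coe-fn lemma for shifted differences. -/
lemma coeFn_shift_sub (hstat : Stationary P) (a : Zd d) {u : Lp ℝ 2 P} {g : Env d → ℝ}
    (hg : g =ᵐ[P] ⇑u) :
    (fun ω => g (shiftEnv a ω) - g ω)
      =ᵐ[P] ⇑((Sop hstat a - ContinuousLinearMap.id ℝ (Lp ℝ 2 P)) u) := by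
  have h1 : ⇑((Sop hstat a - ContinuousLinearMap.id ℝ (Lp ℝ 2 P)) u)
      =ᵐ[P] ⇑(Sop hstat a u) - ⇑u := by
    simpa [ContinuousLinearMap.sub_apply] using Lp.coeFn_sub (Sop hstat a u) u
  have h2 := Sop_coeFn hstat a u
  have h3 : (fun ω => g (shiftEnv a ω)) =ᵐ[P] fun ω => u (shiftEnv a ω) :=
    (hstat a).quasiMeasurePreserving.ae_eq hg
  filter_upwards [h1, h2, h3, hg] with ω e1 e2 e3 e4
  simp only [e1, Pi.sub_apply, e2, Function.comp_apply, e3, e4]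

lemma coeFn_Dop (hstat : Stationary P) (i : Fin d) {u : Lp ℝ 2 P} {g : Env d → ℝ}
    (hg : g =ᵐ[P] ⇑u) :
    (fun ω => Dop i g ω) =ᵐ[P] ⇑(Dlp hstat i u) :=
  coeFn_shift_sub hstat (unitVec i) hg

lemma coeFn_DopStar (hstat : Stationary P) (i : Fin d) {u : Lp ℝ 2 P} {g : Env d → ℝ}
    (hg : g =ᵐ[P] ⇑u) :
    (fun ω => DopStar i g ω) =ᵐ[P] ⇑(DlpStar hstat i u) :=
  coeFn_shift_sub hstat (-(unitVec i)) hg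

lemma coeFn_DD (hstat : Stationary P) (i : Fin d) {u : Lp ℝ 2 P} {g : Env d → ℝ}
    (hg : g =ᵐ[P] ⇑u) :
    (fun ω => Dop i (DopStar i g) ω) =ᵐ[P] ⇑(Dlp hstat i (DlpStar hstat i u)) :=
  coeFn_Dop hstat i (coeFn_DopStar hstat i hg)

lemma coeFn_finsetSum {ι : Type*} (s : Finset ι) (v : ι → Lp ℝ 2 P) :
    ⇑(∑ i ∈ s, v i) =ᵐ[P] fun ω => ∑ i ∈ s, (v i) ω := by
  classical
  induction s using Finset.induction_on with
  | empty => simp only [Finset.sum_empty]; exact Lp.coeFn_zero (E := ℝ) (p := 2) (μ := P)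
  | insert a s' hni ih =>
      rw [Finset.sum_insert hni]
      refine (Lp.coeFn_add _ _).trans ?_
      filter_upwards [ih] with ω e
      simp only [Pi.add_apply, e, Finset.sum_insert hni]

/-- The operator `Σ_i D_i D_i^*` on `L²`. -/
def Tlp (hstat : Stationary P) : Lp ℝ 2 P →L[ℝ] Lp ℝ 2 P :=
  ∑ i : Fin d, (Dlp hstat i).comp (DlpStar hstat i)

/-- The resolvent operator `ε + Σ_i D_i D_i^*` on `L²`. -/
def Aop (hstat : Stationary P) (ε : ℝ) : Lp ℝ 2 P →L[ℝ] Lp ℝ 2 P :=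
  ε • ContinuousLinearMap.id ℝ _ + Tlp hstat

lemma Aop_inner (hstat : Stationary P) (ε : ℝ) (u v : Lp ℝ 2 P) :
    ⟪Aop hstat ε u, v⟫ = ε * ⟪u, v⟫ + ∑ i : Fin d, ⟪DlpStar hstat i u, DlpStar hstat i v⟫ := by
  simp only [Aop, Tlp, ContinuousLinearMap.add_apply, ContinuousLinearMap.smul_apply,
    ContinuousLinearMap.sum_apply, ContinuousLinearMap.coe_comp', Function.comp_apply,
    ContinuousLinearMap.id_apply, inner_add_left, sum_inner, real_inner_smul_left]
  congr 1
  exact Finset.sum_congr rfl fun i _ => Dlp_adjoint hstat i (DlpStar hstat i u) v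

lemma Aop_exists_unique (hstat : Stationary P) {ε : ℝ} (hε : 0 < ε) (g : Lp ℝ 2 P) :
    ∃! u : Lp ℝ 2 P, Aop hstat ε u = g := by
  set B : Lp ℝ 2 P →L[ℝ] Lp ℝ 2 P →L[ℝ] ℝ := (innerSL ℝ).comp (Aop hstat ε) with hB
  have hBapp : ∀ u v, B u v = ⟪Aop hstat ε u, v⟫ := fun u v => rfl
  have hcoer : IsCoercive B := by
    refine ⟨ε, hε, fun u => ?_⟩
    rw [hBapp, Aop_inner]
    have h1 : ε * ‖u‖ * ‖u‖ = ε * ⟪u, u⟫ := by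
      rw [real_inner_self_eq_norm_mul_norm]; ring
    have h2 : (0:ℝ) ≤ ∑ i : Fin d, ⟪DlpStar hstat i u, DlpStar hstat i u⟫ :=
      Finset.sum_nonneg fun i _ => real_inner_self_nonneg
    linarith
  have hAE : ∀ v, hcoer.continuousLinearEquivOfBilin v = Aop hstat ε v := by
    intro v
    refine ext_inner_right ℝ fun w => ?_
    rw [hcoer.continuousLinearEquivOfBilin_apply]
    exact hBapp v w
  refine ⟨hcoer.continuousLinearEquivOfBilin.symm g, ?_, ?_⟩
  · show Aop hstat ε _ = g
    rw [← hAE]; exact hcoer.continuousLinearEquivOfBilin.apply_symm_apply g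
  · intro y hy
    have hy' : Aop hstat ε y = g := hy
    have : hcoer.continuousLinearEquivOfBilin y = g := by rw [hAE]; exact hy'
    rw [← this, ContinuousLinearEquiv.symm_apply_apply]

end AuxWC

section AuxWC2

open scoped RealInnerProductSpace

set_option linter.unusedSectionVars false

variable {d : ℕ} {P : Measure (Env d)} [IsProbabilityMeasure P]

/-- The map `u ↦ (D_i^* u)_i` from `L²(Ω,ℝ)` to `L²(Ω,ℝ^d)` (as a `PiLp 2`). -/
def DSop (hstat : Stationary P) :
    Lp ℝ 2 P →L[ℝ] PiLp 2 (fun _ : Fin d => Lp ℝ 2 P) :=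
  ((PiLp.continuousLinearEquiv 2 ℝ (fun _ : Fin d => Lp ℝ 2 P)).symm.toContinuousLinearMap).comp
    (ContinuousLinearMap.pi fun i => DlpStar hstat i)

lemma DSop_apply (hstat : Stationary P) (u : Lp ℝ 2 P) (i : Fin d) :
    DSop hstat u i = DlpStar hstat i u := rfl

lemma inner_eq_integral (v w : PiLp 2 (fun _ : Fin d => Lp ℝ 2 P))
    (a b : Env d → Fin d → ℝ)
    (ha : ∀ i, (fun ω => a ω i) =ᵐ[P] ⇑(v i)) (hb : ∀ i, (fun ω => b ω i) =ᵐ[P] ⇑(w i)) :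
    ∫ ω, ∑ i : Fin d, a ω i * b ω i ∂P = ⟪v, w⟫ := by
  have hint : ∀ i : Fin d, Integrable (fun ω => a ω i * b ω i) P := by
    intro i
    refine (L2.integrable_inner (𝕜 := ℝ) (v i) (w i)).congr ?_
    filter_upwards [ha i, hb i] with ω e1 e2
    simp only [RCLike.inner_apply, conj_trivial, ← e1, ← e2]
    ring
  rw [MeasureTheory.integral_finset_sum Finset.univ (fun i _ => hint i), PiLp.inner_apply]
  refine Finset.sum_congr rfl fun i _ => ?_
  rw [MeasureTheory.L2.inner_def]
  refine MeasureTheory.integral_congr_ae ?_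
  filter_upwards [ha i, hb i] with ω e1 e2
  simp only [RCLike.inner_apply, conj_trivial, ← e1, ← e2]
  ring

lemma coeFn_Aop (hstat : Stationary P) (ε : ℝ) {w : Lp ℝ 2 P} {g : Env d → ℝ}
    (hg : g =ᵐ[P] ⇑w) :
    ⇑(Aop hstat ε w) =ᵐ[P] fun ω => ε * g ω + ∑ i : Fin d, Dop i (DopStar i g) ω := by
  have h0 : Aop hstat ε w = ε • w + ∑ i : Fin d, Dlp hstat i (DlpStar hstat i w) := by
    simp [Aop, Tlp, ContinuousLinearMap.sum_apply]
  rw [h0]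
  have h1 := Lp.coeFn_add (ε • w) (∑ i : Fin d, Dlp hstat i (DlpStar hstat i w))
  have h2 := Lp.coeFn_smul ε w
  have h3 := coeFn_finsetSum Finset.univ (fun i => Dlp hstat i (DlpStar hstat i w))
  have h4 : ∀ᵐ ω ∂P, ∀ i : Fin d, Dop i (DopStar i g) ω
      = (Dlp hstat i (DlpStar hstat i w)) ω :=
    ae_all_iff.2 fun i => coeFn_DD hstat i hg
  filter_upwards [h1, h2, h3, h4, hg] with ω e1 e2 e3 e4 e5
  rw [e1, Pi.add_apply, e2, e3]
  simp only [Pi.smul_apply, smul_eq_mul, ← e5]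
  exact congrArg _ (Finset.sum_congr rfl fun i _ => (e4 i).symm)

lemma coeFn_sumDlp (hstat : Stationary P) {F : Fin d → Env d → ℝ} {w : Fin d → Lp ℝ 2 P}
    (hF : ∀ i, F i =ᵐ[P] ⇑(w i)) :
    ⇑(∑ i : Fin d, Dlp hstat i (w i)) =ᵐ[P] fun ω => ∑ i : Fin d, Dop i (F i) ω := by
  have h3 := coeFn_finsetSum Finset.univ (fun i => Dlp hstat i (w i))
  have h4 : ∀ᵐ ω ∂P, ∀ i : Fin d, Dop i (F i) ω = (Dlp hstat i (w i)) ω :=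
    ae_all_iff.2 fun i => coeFn_Dop hstat i (hF i)
  filter_upwards [h3, h4] with ω e3 e4
  rw [e3]
  exact Finset.sum_congr rfl fun i _ => (e4 i).symm

end AuxWC2

set_option maxHeartbeats 2000000 in
set_option synthInstance.maxHeartbeats 400000 in
/-- Lemma `z03`, weak convergence: for `f ∈ L²(Ω,ℝ^d)` with orthogonal
projection `ξ` onto the `L²`-closure of `{D^*ζ : ζ ∈ L^∞}`, there is a unique family
`(u_ε)_{ε∈(0,1)} ⊆ L²` with `(ε + D·D^*)u_ε = D·f`, and a sequence `ε_n` along which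
`D^* u_{ε_n} → ξ` weakly in `L²`. -/
theorem weak_convergence
    (d : ℕ) (hd : 2 ≤ d)
    (P : Measure (Env d)) [IsProbabilityMeasure P]
    (hstat : Stationary P) (herg : ErgodicEnv P)
    (f : Env d → Fin d → ℝ) (hfmeas : Measurable f) (hf : MemLp f 2 P)
    (ξ : Env d → Fin d → ℝ) (hξmeas : Measurable ξ) (hξ2 : MemLp ξ 2 P)
    -- `ξ` belongs to the `L²`-closure of `{D^*ζ : ζ ∈ L^∞}`:
    (hξmem : ∃ ζ : ℕ → Env d → ℝ, (∀ n, BddMeas P (ζ n)) ∧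
      Tendsto (fun n => ∫ ω, ∑ i : Fin d, (DopStar i (ζ n) ω - ξ ω i) ^ 2 ∂P)
        atTop (nhds 0))
    -- `f - ξ` is orthogonal to that subspace:
    (hξorth : ∀ ζ : Env d → ℝ, BddMeas P ζ →
      ∫ ω, ∑ i : Fin d, (f ω i - ξ ω i) * DopStar i ζ ω ∂P = 0) :
    ∃ u : ℝ → Env d → ℝ,
      (∀ ε ∈ Set.Ioo (0 : ℝ) 1, Measurable (u ε) ∧ MemLp (u ε) 2 P ∧
        ∀ᵐ ω ∂P,
          ε * u ε ω + ∑ i : Fin d, Dop i (DopStar i (u ε)) ω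
            = ∑ i : Fin d, Dop i (fun ω' => f ω' i) ω) ∧
      (∀ u' : ℝ → Env d → ℝ,
        (∀ ε ∈ Set.Ioo (0 : ℝ) 1, Measurable (u' ε) ∧ MemLp (u' ε) 2 P ∧
          ∀ᵐ ω ∂P,
            ε * u' ε ω + ∑ i : Fin d, Dop i (DopStar i (u' ε)) ω
              = ∑ i : Fin d, Dop i (fun ω' => f ω' i) ω) →
        ∀ ε ∈ Set.Ioo (0 : ℝ) 1, u' ε =ᵐ[P] u ε) ∧
      (∃ εs : ℕ → ℝ, (∀ n, εs n ∈ Set.Ioo (0 : ℝ) 1) ∧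
        ∀ G : Env d → Fin d → ℝ, Measurable G → MemLp G 2 P →
          Tendsto (fun n => ∫ ω, ∑ i : Fin d, DopStar i (u (εs n)) ω * G ω i ∂P)
            atTop (nhds (∫ ω, ∑ i : Fin d, ξ ω i * G ω i ∂P))) := by
  classical
  -- component-wise `Memℒp`
  have hcomp : ∀ (h : Env d → Fin d → ℝ), Measurable h → MemLp h 2 P →
      ∀ i : Fin d, MemLp (fun ω => h ω i) 2 P := by
    intro h hm h2 i
    exact h2.of_le ((measurable_pi_apply i).comp hm).aestronglyMeasurable
      (Filter.Eventually.of_forall fun ω => norm_le_pi_norm (h ω) i)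
  have hfi : ∀ i : Fin d, MemLp (fun ω => f ω i) 2 P := hcomp f hfmeas hf
  have hξi : ∀ i : Fin d, MemLp (fun ω => ξ ω i) 2 P := hcomp ξ hξmeas hξ2
  set fLp : Fin d → Lp ℝ 2 P := fun i => (hfi i).toLp _ with hfLp
  set glp : Lp ℝ 2 P := ∑ i : Fin d, Dlp hstat i (fLp i) with hglp
  -- the solution family
  have hsolex : ∀ ε : ℝ, 0 < ε → ∃! w : Lp ℝ 2 P, Aop hstat ε w = glp :=
    fun ε hε => Aop_exists_unique hstat hε glp
  set sol : ∀ ε : ℝ, 0 < ε → Lp ℝ 2 P := fun ε hε => ((hsolex ε hε).exists).choose with hsoldef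
  have hsol : ∀ (ε : ℝ) (hε : 0 < ε), Aop hstat ε (sol ε hε) = glp :=
    fun ε hε => ((hsolex ε hε).exists).choose_spec
  have hsoluniq : ∀ (ε : ℝ) (hε : 0 < ε) (w : Lp ℝ 2 P),
      Aop hstat ε w = glp → w = sol ε hε :=
    fun ε hε w hw => (hsolex ε hε).unique hw (hsol ε hε)
  set uu : ℝ → Env d → ℝ :=
    fun ε => if hε : 0 < ε then ⇑(sol ε hε) else 0 with huu
  have hueq : ∀ (ε : ℝ) (hε : 0 < ε), uu ε = ⇑(sol ε hε) := by
    intro ε hε; rw [huu]; exact dif_pos hε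
  -- coe of glp
  have hgcoe : ⇑glp =ᵐ[P] fun ω => ∑ i : Fin d, Dop i (fun ω' => f ω' i) ω := by
    rw [hglp]
    exact coeFn_sumDlp hstat (fun i => ((hfi i).coeFn_toLp).symm)
  refine ⟨uu, ?_, ?_, ?_⟩
  · -- existence part
    rintro ε ⟨hε0, hε1⟩
    rw [hueq ε hε0]
    refine ⟨(Lp.stronglyMeasurable _).measurable, Lp.memLp _, ?_⟩
    have h1 := coeFn_Aop hstat ε (Filter.EventuallyEq.refl (ae P) ⇑(sol ε hε0))
    have h2 : ⇑(Aop hstat ε (sol ε hε0)) =ᵐ[P] ⇑glp := by rw [hsol ε hε0]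
    filter_upwards [h1, h2, hgcoe] with ω e1 e2 e3
    rw [← e1, e2, e3]
  · -- uniqueness part
    intro u' hu' ε hεm
    obtain ⟨hε0, hε1⟩ := hεm
    obtain ⟨hm', hl2', hae'⟩ := hu' ε ⟨hε0, hε1⟩
    set w' : Lp ℝ 2 P := hl2'.toLp _ with hw'
    have hw'coe : ⇑w' =ᵐ[P] u' ε := hl2'.coeFn_toLp
    have hAw' : Aop hstat ε w' = glp := by
      apply Lp.ext
      have h1 := coeFn_Aop hstat ε hw'coe.symm
      filter_upwards [h1, hae', hgcoe] with ω e1 e2 e3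
      rw [e1, e2, e3]
    have : w' = sol ε hε0 := hsoluniq ε hε0 w' hAw'
    rw [hueq ε hε0, ← this]
    exact hw'coe.symm
  · -- weak convergence part
    set Ξv : PiLp 2 (fun _ : Fin d => Lp ℝ 2 P) := (WithLp.equiv 2 (∀ _ : Fin d, Lp ℝ 2 P)).symm
      (fun i => (hξi i).toLp _) with hΞv
    set Fv : PiLp 2 (fun _ : Fin d => Lp ℝ 2 P) := (WithLp.equiv 2 (∀ _ : Fin d, Lp ℝ 2 P)).symm
      (fun i => fLp i) with hFv
    have hΞvi : ∀ i, Ξv i = (hξi i).toLp _ := fun i => rfl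
    have hFvi : ∀ i, Fv i = fLp i := fun i => rfl
    set K : Submodule ℝ (PiLp 2 (fun _ : Fin d => Lp ℝ 2 P)) := (LinearMap.range (DSop hstat).toLinearMap).topologicalClosure with hK
    have hKclosed : IsClosed (K : Set (PiLp 2 (fun _ : Fin d => Lp ℝ 2 P))) := Submodule.isClosed_topologicalClosure _
    haveI : CompleteSpace K := hKclosed.completeSpace_coe
    have hmemK : ∀ w : Lp ℝ 2 P, DSop hstat w ∈ K :=
      fun w => Submodule.le_topologicalClosure _ ⟨w, rfl⟩
    -- Ξv ∈ K
    have hΞK : Ξv ∈ K := by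
      obtain ⟨ζ, hζbdd, hζtend⟩ := hξmem
      have hζml : ∀ n, MemLp (ζ n) 2 P := by
        intro n
        obtain ⟨hm, C, hC⟩ := hζbdd n
        exact MemLp.of_bound hm.aestronglyMeasurable C
          (hC.mono fun ω h => by simpa using h)
      set ζLp : ℕ → Lp ℝ 2 P := fun n => (hζml n).toLp _ with hζLp
      have hdiffa : ∀ n i, (fun ω => DopStar i (ζ n) ω - ξ ω i)
          =ᵐ[P] ⇑((DSop hstat (ζLp n) - Ξv) i) := by
        intro n i
        have h1 : (DSop hstat (ζLp n) - Ξv) i = DlpStar hstat i (ζLp n) - Ξv i := rfl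
        rw [h1]
        have h2 := Lp.coeFn_sub (DlpStar hstat i (ζLp n)) (Ξv i)
        have h3 := coeFn_DopStar hstat i ((hζml n).coeFn_toLp).symm
        have h4 : ⇑(Ξv i) =ᵐ[P] fun ω => ξ ω i := (hξi i).coeFn_toLp
        filter_upwards [h2, h3, h4] with ω e2 e3 e4
        rw [e2, Pi.sub_apply, ← e3, e4]
      have hdiff : ∀ n, ‖DSop hstat (ζLp n) - Ξv‖ ^ 2
          = ∫ ω, ∑ i : Fin d, (DopStar i (ζ n) ω - ξ ω i) ^ 2 ∂P := by
        intro n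
        rw [← real_inner_self_eq_norm_sq]
        rw [← inner_eq_integral (DSop hstat (ζLp n) - Ξv) (DSop hstat (ζLp n) - Ξv)
          (fun ω i => DopStar i (ζ n) ω - ξ ω i) (fun ω i => DopStar i (ζ n) ω - ξ ω i)
          (hdiffa n) (hdiffa n)]
        refine MeasureTheory.integral_congr_ae (Filter.Eventually.of_forall fun ω => ?_)
        exact Finset.sum_congr rfl fun i _ => (pow_two _).symm
      have htend2 : Tendsto (fun n => ‖DSop hstat (ζLp n) - Ξv‖) atTop (nhds 0) := by
        have h5 : Tendsto (fun n => ‖DSop hstat (ζLp n) - Ξv‖ ^ 2) atTop (nhds 0) :=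
          hζtend.congr fun n => (hdiff n).symm
        have h6 := h5.sqrt
        rw [Real.sqrt_zero] at h6
        refine h6.congr fun n => ?_
        exact Real.sqrt_sq (norm_nonneg _)
      have h7 : Tendsto (fun n => DSop hstat (ζLp n)) atTop (nhds Ξv) :=
        tendsto_iff_norm_sub_tendsto_zero.2 htend2
      exact hKclosed.mem_of_tendsto h7
        (Filter.Eventually.of_forall fun n => hmemK (ζLp n))
    -- f - ξ orthogonal to K
    have hFva : ∀ i, (fun ω => f ω i - ξ ω i) =ᵐ[P] ⇑((Fv - Ξv) i) := by
      intro i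
      have h1 : (Fv - Ξv) i = fLp i - Ξv i := rfl
      rw [h1]
      have h2 := Lp.coeFn_sub (fLp i) (Ξv i)
      have h3 : ⇑(fLp i) =ᵐ[P] fun ω => f ω i := (hfi i).coeFn_toLp
      have h4 : ⇑(Ξv i) =ᵐ[P] fun ω => ξ ω i := (hξi i).coeFn_toLp
      filter_upwards [h2, h3, h4] with ω e2 e3 e4
      rw [e2, Pi.sub_apply, e3, e4]
    have hφbdd : ∀ (ζ0 : Env d → ℝ), BddMeas P ζ0 → ∀ (hml : MemLp ζ0 2 P),
        ⟪Fv - Ξv, DSop hstat (hml.toLp _)⟫ = 0 := by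
      intro ζ0 hbdd hml
      rw [← inner_eq_integral (Fv - Ξv) (DSop hstat (hml.toLp _))
        (fun ω i => f ω i - ξ ω i) (fun ω i => DopStar i ζ0 ω)
        hFva (fun i => coeFn_DopStar hstat i (hml.coeFn_toLp).symm)]
      exact hξorth ζ0 hbdd
    have hφ0 : ∀ w : Lp ℝ 2 P, ⟪Fv - Ξv, DSop hstat w⟫ = 0 := by
      set φ : Lp ℝ 2 P →L[ℝ] ℝ := (innerSL ℝ (Fv - Ξv)).comp (DSop hstat) with hφ
      have hφsimple : ∀ s : Lp.simpleFunc ℝ 2 P, φ ↑s = 0 := by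
        intro s
        set sf := Lp.simpleFunc.toSimpleFunc s with hsf
        have haes : ⇑sf =ᵐ[P] ⇑(↑s : Lp ℝ 2 P) := Lp.simpleFunc.toSimpleFunc_eq_toFun s
        have hbdd : BddMeas P ⇑sf := by
          refine ⟨sf.measurable, ?_⟩
          obtain ⟨C, hC⟩ := (sf.map fun x : ℝ => |x|).exists_forall_le
          exact ⟨C, Filter.Eventually.of_forall fun ω => hC ω⟩
        have hml : MemLp (⇑sf) 2 P := (Lp.memLp (↑s : Lp ℝ 2 P)).ae_eq haes.symm
        have hts : hml.toLp _ = (↑s : Lp ℝ 2 P) := Lp.ext (hml.coeFn_toLp.trans haes)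
        have : φ ((hml.toLp _ : Lp ℝ 2 P)) = 0 := hφbdd (⇑sf) hbdd hml
        rwa [hts] at this
      have hd := Lp.simpleFunc.denseRange (E := ℝ) (p := 2) (μ := P)
        (by norm_num : (2 : ℝ≥0∞) ≠ ∞)
      have heq : ⇑φ = fun _ => (0 : ℝ) :=
        hd.equalizer φ.continuous continuous_const (funext fun s => hφsimple s)
      intro w
      have h9 := congrFun heq w
      simpa only [hφ, ContinuousLinearMap.coe_comp', Function.comp_apply,
        innerSL_apply_apply] using h9
    have hOrth : ∀ x ∈ K, ⟪Fv - Ξv, x⟫ = 0 := by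
      have hsub : K ≤ (Submodule.span ℝ {Fv - Ξv})ᗮ := by
        rw [hK]
        refine Submodule.topologicalClosure_minimal _ ?_ (Submodule.isClosed_orthogonal _)
        rintro y ⟨w, rfl⟩
        exact Submodule.mem_orthogonal_singleton_iff_inner_right.2 (hφ0 w)
      intro x hx
      exact Submodule.mem_orthogonal_singleton_iff_inner_right.1 (hsub hx)
    -- the key identity
    have hDSinner : ∀ x y : Lp ℝ 2 P, ⟪DSop hstat x, DSop hstat y⟫
        = ∑ i : Fin d, ⟪DlpStar hstat i x, DlpStar hstat i y⟫ := by
      intro x y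
      rw [PiLp.inner_apply]
      simp only [DSop_apply]
    have hFvinner : ∀ y : Lp ℝ 2 P, ⟪Fv, DSop hstat y⟫
        = ∑ i : Fin d, ⟪fLp i, DlpStar hstat i y⟫ := by
      intro y
      rw [PiLp.inner_apply]
      simp only [DSop_apply, hFvi]
    have hstar : ∀ (ε : ℝ) (hε : 0 < ε) (v : Lp ℝ 2 P),
        ε * ⟪sol ε hε, v⟫ + ⟪DSop hstat (sol ε hε), DSop hstat v⟫ = ⟪Fv, DSop hstat v⟫ := by
      intro ε hε v
      have h1 : ⟪Aop hstat ε (sol ε hε), v⟫ = ⟪glp, v⟫ := by rw [hsol ε hε]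
      rw [Aop_inner] at h1
      have h2 : ⟪glp, v⟫ = ∑ i : Fin d, ⟪fLp i, DlpStar hstat i v⟫ := by
        rw [hglp, sum_inner]
        exact Finset.sum_congr rfl fun i _ => Dlp_adjoint hstat i (fLp i) v
      rw [hDSinner, hFvinner]
      rw [h2] at h1
      exact h1
    -- bounds
    have hkey : ∀ (ε : ℝ) (hε : 0 < ε),
        ε * ‖sol ε hε‖ ^ 2 + ‖DSop hstat (sol ε hε)‖ ^ 2
          ≤ ‖Ξv‖ * ‖DSop hstat (sol ε hε)‖ := by
      intro ε hε
      have h1 := hstar ε hε (sol ε hε)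
      rw [real_inner_self_eq_norm_sq, real_inner_self_eq_norm_sq] at h1
      have h3 : ⟪Fv - Ξv, DSop hstat (sol ε hε)⟫ = 0 := hOrth _ (hmemK _)
      rw [inner_sub_left, sub_eq_zero] at h3
      have h4 : ⟪Ξv, DSop hstat (sol ε hε)⟫ ≤ ‖Ξv‖ * ‖DSop hstat (sol ε hε)‖ :=
        real_inner_le_norm _ _
      rw [← h3] at h4
      linarith [h1, h4]
    have hb1 : ∀ (ε : ℝ) (hε : 0 < ε), ‖DSop hstat (sol ε hε)‖ ≤ ‖Ξv‖ := by
      intro ε hε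
      have h1 := hkey ε hε
      have h2 : 0 ≤ ε * ‖sol ε hε‖ ^ 2 := by positivity
      rcases eq_or_lt_of_le (norm_nonneg (DSop hstat (sol ε hε))) with h | h
      · rw [← h]; exact norm_nonneg _
      · have : ‖DSop hstat (sol ε hε)‖ * ‖DSop hstat (sol ε hε)‖
            ≤ ‖Ξv‖ * ‖DSop hstat (sol ε hε)‖ := by nlinarith
        exact le_of_mul_le_mul_right this h
    have hb2 : ∀ (ε : ℝ) (hε : 0 < ε), ε * ‖sol ε hε‖ ≤ Real.sqrt ε * ‖Ξv‖ := by
      intro ε hε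
      have h1 := hkey ε hε
      have h2 := hb1 ε hε
      have h3 : 0 ≤ ‖DSop hstat (sol ε hε)‖ := norm_nonneg _
      have h5 : ε * ‖sol ε hε‖ ^ 2 ≤ ‖Ξv‖ ^ 2 := by nlinarith
      have h6 : Real.sqrt ε * ‖sol ε hε‖ ≤ ‖Ξv‖ := by
        have := Real.sqrt_le_sqrt h5
        rwa [Real.sqrt_mul hε.le, Real.sqrt_sq (norm_nonneg _),
          Real.sqrt_sq (norm_nonneg _)] at this
      calc ε * ‖sol ε hε‖ = Real.sqrt ε * (Real.sqrt ε * ‖sol ε hε‖) := by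
            rw [← mul_assoc, Real.mul_self_sqrt hε.le]
        _ ≤ Real.sqrt ε * ‖Ξv‖ :=
            mul_le_mul_of_nonneg_left h6 (Real.sqrt_nonneg ε)
    have hw0 : ∀ (ε : ℝ) (hε : 0 < ε) (w : Lp ℝ 2 P),
        ⟪DSop hstat (sol ε hε) - Ξv, DSop hstat w⟫ = -(ε * ⟪sol ε hε, w⟫) := by
      intro ε hε w
      have h1 := hstar ε hε w
      have h3 : ⟪Fv - Ξv, DSop hstat w⟫ = 0 := hOrth _ (hmemK w)
      rw [inner_sub_left, sub_eq_zero] at h3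
      rw [inner_sub_left]
      linarith [h1, h3]
    -- the sequence
    set εs : ℕ → ℝ := fun n => ((n : ℝ) + 2)⁻¹ with hεsdef
    have hεs : ∀ n, εs n ∈ Set.Ioo (0 : ℝ) 1 := by
      intro n
      have hn0 : (0 : ℝ) ≤ (n : ℝ) := Nat.cast_nonneg n
      constructor
      · show (0 : ℝ) < ((n : ℝ) + 2)⁻¹
        positivity
      · show ((n : ℝ) + 2)⁻¹ < 1
        rw [inv_lt_one_iff₀]
        right
        linarith
    have hεstend : Tendsto εs atTop (nhds 0) := by
      have h1 : Tendsto (fun n : ℕ => (n : ℝ) + 2) atTop atTop :=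
        tendsto_atTop_add_const_right _ 2 tendsto_natCast_atTop_atTop
      exact h1.inv_tendsto_atTop
    refine ⟨εs, hεs, ?_⟩
    intro G hGm hG2
    have hGi : ∀ i : Fin d, MemLp (fun ω => G ω i) 2 P := hcomp G hGm hG2
    set Gv : PiLp 2 (fun _ : Fin d => Lp ℝ 2 P) := (WithLp.equiv 2 (∀ _ : Fin d, Lp ℝ 2 P)).symm
      (fun i => (hGi i).toLp _) with hGv
    have hGvi : ∀ i, ⇑(Gv i) =ᵐ[P] fun ω => G ω i := fun i => (hGi i).coeFn_toLp
    have hint1 : ∀ n : ℕ, ∫ ω, ∑ i : Fin d, DopStar i (uu (εs n)) ω * G ω i ∂P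
        = ⟪DSop hstat (sol (εs n) (hεs n).1), Gv⟫ := by
      intro n
      refine inner_eq_integral (DSop hstat (sol (εs n) (hεs n).1)) Gv
        (fun ω i => DopStar i (uu (εs n)) ω) (fun ω i => G ω i)
        (fun i => ?_) (fun i => (hGvi i).symm)
      exact coeFn_DopStar hstat i (Filter.EventuallyEq.of_eq (hueq (εs n) (hεs n).1))
    have hval : ∫ ω, ∑ i : Fin d, ξ ω i * G ω i ∂P = ⟪Ξv, Gv⟫ :=
      inner_eq_integral Ξv Gv (fun ω i => ξ ω i) (fun ω i => G ω i)
        (fun i => ((hξi i).coeFn_toLp).symm) (fun i => (hGvi i).symm)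
    -- main convergence
    have h0 : Tendsto (fun n => ⟪DSop hstat (sol (εs n) (hεs n).1) - Ξv, Gv⟫)
        atTop (nhds 0) := by
      set PGv : PiLp 2 (fun _ : Fin d => Lp ℝ 2 P) := ↑(K.orthogonalProjectionOnto Gv) with hPGv
      have hPGK : PGv ∈ K := Submodule.coe_mem _
      have hproj : ∀ n, ⟪DSop hstat (sol (εs n) (hεs n).1) - Ξv, Gv⟫
          = ⟪DSop hstat (sol (εs n) (hεs n).1) - Ξv, PGv⟫ := by
        intro n
        have hk : DSop hstat (sol (εs n) (hεs n).1) - Ξv ∈ K := K.sub_mem (hmemK _) hΞK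
        have hperp : Gv - PGv ∈ Kᗮ := Submodule.sub_starProjection_mem_orthogonal (K := K) Gv
        have := Submodule.inner_right_of_mem_orthogonal hk hperp
        rw [inner_sub_right] at this
        linarith
      rw [Metric.tendsto_atTop]
      intro δ hδ
      -- approximate the projection by an element of the range of DS
      have hPGcl : PGv ∈ closure ((LinearMap.range (DSop hstat).toLinearMap :
          Submodule ℝ (PiLp 2 (fun _ : Fin d => Lp ℝ 2 P))) :
          Set (PiLp 2 (fun _ : Fin d => Lp ℝ 2 P))) := by
        rw [← Submodule.topologicalClosure_coe]
        exact hPGK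
      have hδ2 : 0 < δ / (4 * ‖Ξv‖ + 2) := by positivity
      obtain ⟨y, hy, hydist⟩ := Metric.mem_closure_iff.1 hPGcl _ hδ2
      obtain ⟨w, rfl⟩ := hy
      -- choose N
      have hsq : Tendsto (fun n => Real.sqrt (εs n) * (‖Ξv‖ * ‖w‖)) atTop (nhds 0) := by
        have h1 := hεstend.sqrt
        rw [Real.sqrt_zero] at h1
        have h2 := h1.mul_const (‖Ξv‖ * ‖w‖)
        rwa [zero_mul] at h2
      have hev : ∀ᶠ n in atTop, Real.sqrt (εs n) * (‖Ξv‖ * ‖w‖) < δ / 2 :=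
        hsq.eventually_lt_const (by positivity)
      obtain ⟨N, hN⟩ := Filter.eventually_atTop.1 hev
      refine ⟨N, fun n hn => ?_⟩
      rw [Real.dist_0_eq_abs, hproj n]
      set k := DSop hstat (sol (εs n) (hεs n).1) - Ξv with hkdef
      have hsplit : ⟪k, PGv⟫ = ⟪k, DSop hstat w⟫ + ⟪k, PGv - DSop hstat w⟫ := by
        rw [← inner_add_right]
        congr 1
        abel
      have hfirst : |⟪k, DSop hstat w⟫| < δ / 2 := by
        rw [hkdef, hw0 (εs n) (hεs n).1 w, abs_neg, abs_mul,
          abs_of_pos (hεs n).1]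
        calc εs n * |⟪sol (εs n) (hεs n).1, w⟫|
            ≤ εs n * (‖sol (εs n) (hεs n).1‖ * ‖w‖) := by
              exact mul_le_mul_of_nonneg_left (abs_real_inner_le_norm _ _) (hεs n).1.le
          _ = (εs n * ‖sol (εs n) (hεs n).1‖) * ‖w‖ := by ring
          _ ≤ (Real.sqrt (εs n) * ‖Ξv‖) * ‖w‖ :=
              mul_le_mul_of_nonneg_right (hb2 (εs n) (hεs n).1) (norm_nonneg w)
          _ = Real.sqrt (εs n) * (‖Ξv‖ * ‖w‖) := by ring
          _ < δ / 2 := hN n hn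
      have hsecond : |⟪k, PGv - DSop hstat w⟫| ≤ δ / 2 := by
        have h1 : |⟪k, PGv - DSop hstat w⟫| ≤ ‖k‖ * ‖PGv - DSop hstat w‖ :=
          abs_real_inner_le_norm _ _
        have h2 : ‖k‖ ≤ 2 * ‖Ξv‖ := by
          rw [hkdef]
          calc ‖DSop hstat (sol (εs n) (hεs n).1) - Ξv‖
              ≤ ‖DSop hstat (sol (εs n) (hεs n).1)‖ + ‖Ξv‖ := norm_sub_le _ _
            _ ≤ ‖Ξv‖ + ‖Ξv‖ := by linarith [hb1 (εs n) (hεs n).1]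
            _ = 2 * ‖Ξv‖ := by ring
        have h3 : ‖PGv - DSop hstat w‖ ≤ δ / (4 * ‖Ξv‖ + 2) := by
          rw [← dist_eq_norm]
          exact hydist.le
        have h4 : ‖k‖ * ‖PGv - DSop hstat w‖ ≤ 2 * ‖Ξv‖ * (δ / (4 * ‖Ξv‖ + 2)) := by
          exact mul_le_mul h2 h3 (norm_nonneg _) (by positivity)
        have h5 : 2 * ‖Ξv‖ * (δ / (4 * ‖Ξv‖ + 2)) ≤ δ / 2 := by
          rw [← mul_div_assoc, div_le_div_iff₀ (by positivity) (by norm_num : (0:ℝ) < 2)]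
          nlinarith [norm_nonneg Ξv, hδ.le]
        linarith
      calc |⟪k, PGv⟫| ≤ |⟪k, DSop hstat w⟫| + |⟪k, PGv - DSop hstat w⟫| := by
            rw [hsplit]; exact abs_add_le _ _
        _ < δ / 2 + δ / 2 := by linarith
        _ = δ := by ring
    have key : Tendsto (fun n => ⟪DSop hstat (sol (εs n) (hεs n).1), Gv⟫)
        atTop (nhds (⟪Ξv, Gv⟫)) := by
      have h1 := h0.add_const (⟪Ξv, Gv⟫)
      rw [zero_add] at h1
      refine h1.congr fun n => ?_
      rw [inner_sub_left]
      ring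
    have := key.congr fun n => (hint1 n).symm
    rwa [← hval] at this


end
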